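/- Existence lemma for Kh in the canonical model: let s ∈ S^c, let G, H be groups with ∅ ≠ H ⊆ G, and let (ψ,H) be an atomic canonical action executable on [s]_G (every state in the ∼^c_G-class of s has a (ψ,H)-successor). If Kh_G φ ∈ ed(s') for every state s' such that [s]_G →_{(ψ,H)} [s']_G, then Kh_G φ ∈ ed(s). -/

import Mathlib

namespace DKH

/-- Groups of agents: subsets of the finite agent set `I = {i_0, …, i_{n-1}}`. -/
abbrev Grp (n : ℕ) := Finset (Fin n)

/-- The language DKH: φ ::= ⊤ | p | ¬φ | (φ∧φ) | K_G φ | Kh_G φ. -/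
inductive Formula (P : Type) (n : ℕ) : Type
  | top  : Formula P n
  | atom : P → Formula P n
  | neg  : Formula P n → Formula P n
  | and  : Formula P n → Formula P n → Formula P n
  | K    : Grp n → Formula P n → Formula P n
  | Kh   : Grp n → Formula P n → Formula P n

instance {P n} : Inhabited (Formula P n) := ⟨.top⟩

namespace Formula
/-- Defined implication φ → ψ := ¬(φ ∧ ¬ψ). -/
def imp {P n} (φ ψ : Formula P n) : Formula P n := .neg (φ.and ψ.neg)
/-- Defined falsum ⊥ := ¬⊤. -/
def bot {P : Type} {n : ℕ} : Formula P n := .neg .top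
end Formula

/-- A model ⟨S, {∼_i}, {A_G}, {→_a}, V⟩. -/
structure KhModel (P : Type) (n : ℕ) where
  State : Type
  Act : Type
  sim : Fin n → State → State → Prop
  sim_equiv : ∀ i, Equivalence (sim i)
  A : Grp n → Set Act
  A_empty : A ∅ = ∅
  A_disj : ∀ G H : Grp n, G ⊂ H → A G ∩ A H = ∅
  tr : Act → State → State → Prop
  V : P → Set State

/-- Distributed indistinguishability: s ∼_G t iff s ∼_i t for every i ∈ G. -/
def gsim {P n} (M : KhModel P n) (G : Grp n) (s t : M.State) : Prop :=
  ∀ i ∈ G, M.sim i s t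

/-- Distributed actions: atomic group actions, or joint tuples ⟨d_0,…,d_k⟩. -/
inductive DAct (Act : Type) : Type
  | atom : Act → DAct Act
  | joint : List (DAct Act) → DAct Act

mutual
/-- Distributed transition relation: →_{⟨d_0,…,d_k⟩} = ⋂_j →_{d_j}. -/
def dtr {Act State : Type} (tr : Act → State → State → Prop) :
    DAct Act → State → State → Prop
  | .atom a, s, t => tr a s t
  | .joint ds, s, t => dtrList tr ds s t

def dtrList {Act State : Type} (tr : Act → State → State → Prop) :
    List (DAct Act) → State → State → Prop
  | [], _, _ => True
  | d :: ds, s, t => dtr tr d s t ∧ dtrList tr ds s t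
end

/-- `Gs` is a partial partition of `G`: a family of nonempty, pairwise disjoint
blocks, all included in `G` (i.e. a partition of a subset of `G`). -/
def PartialPartition {n : ℕ} (G : Grp n) (Gs : List (Grp n)) : Prop :=
  (∀ B ∈ Gs, B ≠ ∅) ∧ Gs.Pairwise (fun B C => Disjoint B C) ∧ (∀ B ∈ Gs, B ⊆ G)

/-- The fixed ordering on mutually disjoint nonempty groups: G ≺ H iff the
minimal index of an agent in G is below that of H. -/
def grpLt {n : ℕ} (B C : Grp n) : Prop := B.min < C.min

/-- Membership in the set A*_G of distributed actions of group G: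
the closure of A^+_G = ⋃_{G'⊆G} A_{G'} under forming joint actions
⟨d_0,…,d_k⟩ ∈ A*_{G_0} × ⋯ × A*_{G_k} for non-trivial partial partitions
{G_0,…,G_k} of G listed in the fixed order ≺. -/
inductive star {n : ℕ} {Act : Type} (A : Grp n → Set Act) : Grp n → DAct Act → Prop
  | base {G G' : Grp n} {a : Act} :
      G' ⊆ G → a ∈ A G' → star A G (.atom a)
  | joint {G : Grp n} {Gs : List (Grp n)} {ds : List (DAct Act)} :
      2 ≤ Gs.length → PartialPartition G Gs → Gs.Chain' grpLt →
      List.Forall₂ (star A) Gs ds → star A G (.joint ds)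

/-- Membership in A^+_G = ⋃_{G'⊆G} A_{G'} (as a set of distributed actions). -/
def inAplus {n : ℕ} {Act : Type} (A : Grp n → Set Act) (G : Grp n) (d : DAct Act) : Prop :=
  ∃ G' : Grp n, G' ⊆ G ∧ ∃ a ∈ A G', d = .atom a

/-- d is executable on X if every s ∈ X has a d-successor. -/
def ExecutableOn {P n} (M : KhModel P n) (d : DAct M.Act) (X : Set M.State) : Prop :=
  ∀ s ∈ X, ∃ t, dtr M.tr d s t

/-- A strategy of group G: a partial function from ∼_G-equivalence classes to
A*_G such that the prescribed action is executable on the class. -/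
structure Strategy {P n} (M : KhModel P n) (G : Grp n) where
  act : M.State → Option (DAct M.Act)
  uniform : ∀ s t, gsim M G s t → act s = act t
  mem_star : ∀ s d, act s = some d → star M.A G d
  exec : ∀ s d, act s = some d → ∀ t, gsim M G s t → ∃ u, dtr M.tr d t u

/-- One step of an execution: [s]_G →_{σ([s]_G)} [t]_G. -/
def stepRel {P n} {M : KhModel P n} {G : Grp n} (σ : Strategy M G) (s t : M.State) : Prop :=
  ∃ d, σ.act s = some d ∧ ∃ u v, gsim M G s u ∧ gsim M G t v ∧ dtr M.tr d u v

/-- Leaf-nodes of the finite complete executions of σ starting from [s]_G,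
as a ∼_G-closed set of states. -/
def CELeaf {P n} {M : KhModel P n} {G : Grp n} (σ : Strategy M G) (s : M.State) :
    Set M.State :=
  {t | ∃ (m : ℕ) (f : ℕ → M.State), gsim M G s (f 0) ∧
    (∀ j < m, stepRel σ (f j) (f (j+1))) ∧ σ.act (f m) = none ∧ gsim M G (f m) t}

/-- There is an infinite (hence complete) execution of σ starting from [s]_G. -/
def InfiniteFrom {P n} {M : KhModel P n} {G : Grp n} (σ : Strategy M G) (s : M.State) : Prop :=
  ∃ f : ℕ → M.State, gsim M G s (f 0) ∧ ∀ j, stepRel σ (f j) (f (j+1))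

/-- Inner-nodes of the complete executions of σ starting from [s]_G,
as a ∼_G-closed set of states. -/
def CEInner {P n} {M : KhModel P n} {G : Grp n} (σ : Strategy M G) (s : M.State) :
    Set M.State :=
  {t | (∃ (m : ℕ) (f : ℕ → M.State), gsim M G s (f 0) ∧
          (∀ j < m, stepRel σ (f j) (f (j+1))) ∧ σ.act (f m) = none ∧
          ∃ j < m, gsim M G (f j) t) ∨
       (∃ f : ℕ → M.State, gsim M G s (f 0) ∧
          (∀ j, stepRel σ (f j) (f (j+1))) ∧ ∃ j, gsim M G (f j) t)}

/-- Truth at a pointed model. -/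
def Sat {P n} (M : KhModel P n) : M.State → Formula P n → Prop
  | _, .top => True
  | s, .atom p => s ∈ M.V p
  | s, .neg φ => ¬ Sat M s φ
  | s, .and φ ψ => Sat M s φ ∧ Sat M s ψ
  | s, .K G φ => ∀ t, gsim M G s t → Sat M t φ
  | s, .Kh G φ => ∃ σ : Strategy M G,
      (∀ t ∈ CELeaf σ s, Sat M t φ) ∧ ¬ InfiniteFrom σ s

/-- Boolean evaluation treating ⊤, ¬, ∧ as connectives and everything else
as atoms; used to define propositional tautologies. -/
def beval {P n} (v : Formula P n → Bool) : Formula P n → Bool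
  | .top => true
  | .atom p => v (.atom p)
  | .neg φ => !(beval v φ)
  | .and φ ψ => beval v φ && beval v ψ
  | .K G φ => v (.K G φ)
  | .Kh G φ => v (.Kh G φ)

/-- Instances of propositional tautologies. -/
def IsTaut {P n} (φ : Formula P n) : Prop := ∀ v, beval v φ = true

/-- The proof system SDKH. -/
inductive Provable {P : Type} {n : ℕ} : Formula P n → Prop
  | taut {φ} : IsTaut φ → Provable φ
  | distK {G : Grp n} {φ ψ} :
      Provable (((Formula.K G φ).and (Formula.K G (φ.imp ψ))).imp (Formula.K G ψ))
  | axT {G : Grp n} {φ} : Provable ((Formula.K G φ).imp φ)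
  | ax4 {G : Grp n} {φ} : Provable ((Formula.K G φ).imp (Formula.K G (Formula.K G φ)))
  | ax5 {G : Grp n} {φ} :
      Provable ((Formula.neg (Formula.K G φ)).imp (Formula.K G (Formula.neg (Formula.K G φ))))
  | axKMono {G H : Grp n} {φ} : G ⊆ H → Provable ((Formula.K G φ).imp (Formula.K H φ))
  | axKhMono {G H : Grp n} {φ} : G ⊆ H → Provable ((Formula.Kh G φ).imp (Formula.Kh H φ))
  | axKtoKh {G : Grp n} {φ} : Provable ((Formula.K G φ).imp (Formula.Kh G φ))
  | axEmpKhtoK {φ} : Provable ((Formula.Kh ∅ φ).imp (Formula.K ∅ φ))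
  | axKhtoKKh {G : Grp n} {φ} : Provable ((Formula.Kh G φ).imp (Formula.K G (Formula.Kh G φ)))
  | axEmpMono {G : Grp n} {φ ψ} :
      Provable ((Formula.K ∅ (φ.imp ψ)).imp (Formula.K ∅ ((Formula.Kh G φ).imp (Formula.Kh G ψ))))
  | axKhbot {G : Grp n} : Provable ((Formula.Kh G Formula.bot).imp Formula.bot)
  | axKhtoKhK {G : Grp n} {φ} : Provable ((Formula.Kh G φ).imp (Formula.Kh G (Formula.K G φ)))
  | axKhKh {G : Grp n} {φ} : Provable ((Formula.Kh G (Formula.Kh G φ)).imp (Formula.Kh G φ))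
  | mp {φ ψ} : Provable (φ.imp ψ) → Provable φ → Provable ψ
  | necK {G : Grp n} {φ} : Provable φ → Provable (Formula.K G φ)

/-- Conjunction of a finite list of formulas. -/
def conj {P n} (L : List (Formula P n)) : Formula P n := L.foldr Formula.and Formula.top

/-- SDKH-consistency of a set of formulas. -/
def Consistent {P n} (X : Set (Formula P n)) : Prop :=
  ¬ ∃ L : List (Formula P n), (∀ φ ∈ L, φ ∈ X) ∧ Provable ((conj L).imp Formula.bot)

/-- Maximal consistent sets. -/
def MCS {P n} (X : Set (Formula P n)) : Prop :=
  Consistent X ∧ ∀ φ ∉ X, ¬ Consistent (insert φ X)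

/-! ### The canonical model -/

/-- One step ⟨(φ,G),H⟩X of a mixed sequence. -/
structure CStep (P : Type) (n : ℕ) where
  fml : Formula P n
  G : Grp n
  H : Grp n
  X : Set (Formula P n)

instance {P n} : Inhabited (CStep P n) := ⟨⟨.top, ∅, ∅, ∅⟩⟩

/-- The conditions on a mixed sequence X_0⟨(φ_1,G_1),H_1⟩X_1⋯⟨(φ_n,G_n),H_n⟩X_n
(the previous MCS being `X`). -/
def goodFrom {P n} : Set (Formula P n) → List (CStep P n) → Prop
  | _, [] => True
  | X, c :: rest =>
      MCS c.X ∧ c.G ≠ ∅ ∧ (Formula.Kh c.G c.fml) ∈ X ∧ (Formula.K c.G c.fml) ∈ c.X ∧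
      (∀ ψ, (Formula.K c.H ψ) ∈ X → ψ ∈ c.X) ∧ goodFrom c.X rest

/-- The final MCS `ed(s)` of a mixed sequence. -/
def edOf {P n} (X0 : Set (Formula P n)) (l : List (CStep P n)) : Set (Formula P n) :=
  l.foldl (fun _ c => c.X) X0

/-- States of the canonical model: mixed sequences starting at X_0. -/
def CState {P : Type} {n : ℕ} (X0 : Set (Formula P n)) := {l : List (CStep P n) // goodFrom X0 l}

/-- Canonical epistemic relation ∼^c_i. -/
def csim {P n} (X0 : Set (Formula P n)) (i : Fin n) (s t : CState X0) : Prop :=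
  ∃ k : ℕ, k ≤ s.1.length ∧ k ≤ t.1.length ∧
    (∀ j < k, (s.1.getD j default).X = (t.1.getD j default).X ∧
              (s.1.getD j default).H = (t.1.getD j default).H) ∧
    (∀ j, k ≤ j → j < s.1.length → i ∈ (s.1.getD j default).H) ∧
    (∀ j, k ≤ j → j < t.1.length → i ∈ (t.1.getD j default).H)

/-- Canonical atomic actions: pairs (φ, G). -/
abbrev CAct (P : Type) (n : ℕ) := Formula P n × Grp n

/-- Canonical atomic action sets A^c_G = {(φ,G) : φ ∈ DKH} for G ≠ ∅, A^c_∅ = ∅. -/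
def cA {P : Type} {n : ℕ} (G : Grp n) : Set (CAct P n) := {a | a.2 = G ∧ G ≠ ∅}

/-- Canonical transition: s →_{(φ,G)} t iff t = s⟨(φ,G),G'⟩X for some G' and MCS X. -/
def ctr {P n} (X0 : Set (Formula P n)) (a : CAct P n) (s t : CState X0) : Prop :=
  ∃ (G' : Grp n) (Y : Set (Formula P n)), MCS Y ∧ t.1 = s.1 ++ [⟨a.1, a.2, G', Y⟩]

theorem csim_equiv {P n} (X0 : Set (Formula P n)) (i : Fin n) : Equivalence (csim X0 i) := by
  constructor
  · intro s
    exact ⟨s.1.length, le_rfl, le_rfl, fun j _ => ⟨rfl, rfl⟩,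
      fun j h1 h2 => absurd h2 (by omega), fun j h1 h2 => absurd h2 (by omega)⟩
  · rintro s t ⟨k, h1, h2, h3, h4, h5⟩
    exact ⟨k, h2, h1, fun j hj => ⟨(h3 j hj).1.symm, (h3 j hj).2.symm⟩, h5, h4⟩
  · rintro s t u ⟨k1, hk1s, hk1t, heq1, hs1, ht1⟩ ⟨k2, hk2t, hk2u, heq2, ht2, hu2⟩
    refine ⟨min k1 k2, le_trans (min_le_left _ _) hk1s, le_trans (min_le_right _ _) hk2u,
      ?_, ?_, ?_⟩
    · intro j hj
      have e1 := heq1 j (lt_of_lt_of_le hj (min_le_left _ _))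
      have e2 := heq2 j (lt_of_lt_of_le hj (min_le_right _ _))
      exact ⟨e1.1.trans e2.1, e1.2.trans e2.2⟩
    · intro j hj hjs
      by_cases h : k1 ≤ j
      · exact hs1 j h hjs
      · have hj2 : k2 ≤ j := by omega
        have hjt : j < t.1.length := by omega
        have := ht2 j hj2 hjt
        have e := (heq1 j (by omega)).2
        rw [e]; exact this
    · intro j hj hju
      by_cases h : k2 ≤ j
      · exact hu2 j h hju
      · have hj1 : k1 ≤ j := by omega
        have hjt : j < t.1.length := by omega
        have := ht1 j hj1 hjt
        have e := (heq2 j (by omega)).2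
        rw [← e]; exact this

theorem cA_empty {P : Type} {n : ℕ} : (cA (P := P) (n := n) ∅) = ∅ := by
  ext a; simp [cA]

theorem cA_disj {P : Type} {n : ℕ} (G H : Grp n) (h : G ⊂ H) :
    cA (P := P) (n := n) G ∩ cA H = ∅ := by
  ext a
  simp only [Set.mem_inter_iff, Set.mem_empty_iff_false, iff_false, cA, Set.mem_setOf_eq]
  rintro ⟨⟨rfl, -⟩, ⟨h2, -⟩⟩
  exact h.ne h2

/-- The canonical model M^c(X_0). -/
def canonicalModel {P : Type} {n : ℕ} (X0 : Set (Formula P n)) : KhModel P n where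
  State := CState X0
  Act := CAct P n
  sim := csim X0
  sim_equiv := csim_equiv X0
  A := cA
  A_empty := cA_empty
  A_disj := cA_disj
  tr := ctr X0
  V := fun p => {s : CState X0 | Formula.atom p ∈ edOf X0 s.1}


/-! ### Auxiliary lemmas -/

section Aux

variable {P : Type} {n : ℕ}

open Formula in
lemma prov_trans {φ ψ χ : Formula P n} (h1 : Provable (φ.imp ψ)) (h2 : Provable (ψ.imp χ)) :
    Provable (φ.imp χ) := by
  have t : Provable ((φ.imp ψ).imp ((ψ.imp χ).imp (φ.imp χ))) := by
    apply Provable.taut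
    intro v
    simp only [Formula.imp, beval]
    cases beval v φ <;> cases beval v ψ <;> cases beval v χ <;> rfl
  exact Provable.mp (Provable.mp t h1) h2

lemma prov_imp_mp {A B C : Formula P n} (h1 : Provable (A.imp (B.imp C)))
    (h2 : Provable (A.imp B)) : Provable (A.imp C) := by
  have t : Provable ((A.imp (B.imp C)).imp ((A.imp B).imp (A.imp C))) := by
    apply Provable.taut
    intro v
    simp only [Formula.imp, beval]
    cases beval v A <;> cases beval v B <;> cases beval v C <;> rfl
  exact Provable.mp (Provable.mp t h1) h2

lemma prov_weaken {A B : Formula P n} (h : Provable B) : Provable (A.imp B) := by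
  have t : Provable (B.imp (A.imp B)) := by
    apply Provable.taut
    intro v
    simp only [Formula.imp, beval]
    cases beval v A <;> cases beval v B <;> rfl
  exact Provable.mp t h

lemma prov_imp_self {A : Formula P n} : Provable (A.imp A) := by
  apply Provable.taut
  intro v
  simp only [Formula.imp, beval]
  cases beval v A <;> rfl

lemma prov_and_left {A B : Formula P n} : Provable ((A.and B).imp A) := by
  apply Provable.taut
  intro v
  simp only [Formula.imp, beval]
  cases beval v A <;> cases beval v B <;> rfl

lemma prov_and_right {A B : Formula P n} : Provable ((A.and B).imp B) := by
  apply Provable.taut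
  intro v
  simp only [Formula.imp, beval]
  cases beval v A <;> cases beval v B <;> rfl

lemma prov_and_intro {A B : Formula P n} : Provable (A.imp (B.imp (A.and B))) := by
  apply Provable.taut
  intro v
  simp only [Formula.imp, beval]
  cases beval v A <;> cases beval v B <;> rfl

lemma prov_export {A B C : Formula P n} (h : Provable ((A.and B).imp C)) :
    Provable (A.imp (B.imp C)) := by
  have t : Provable (((A.and B).imp C).imp (A.imp (B.imp C))) := by
    apply Provable.taut
    intro v
    simp only [Formula.imp, beval]
    cases beval v A <;> cases beval v B <;> cases beval v C <;> rfl
  exact Provable.mp t h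

lemma prov_conj_intro {A : Formula P n} {L : List (Formula P n)}
    (h : ∀ χ ∈ L, Provable (A.imp χ)) : Provable (A.imp (conj L)) := by
  induction L with
  | nil =>
      apply prov_weaken
      apply Provable.taut
      intro v; rfl
  | cons χ t ih =>
      have h1 : Provable (A.imp χ) := h χ (by simp)
      have h2 : Provable (A.imp (conj t)) := ih fun χ' hχ' => h χ' (by simp [hχ'])
      have : Provable (A.imp ((conj t).imp (χ.and (conj t)))) :=
        prov_imp_mp (prov_weaken prov_and_intro) h1
      exact prov_imp_mp this h2

lemma prov_conj_mem {χ : Formula P n} {L : List (Formula P n)} (h : χ ∈ L) :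
    Provable ((conj L).imp χ) := by
  induction L with
  | nil => simp at h
  | cons a t ih =>
      rcases List.mem_cons.1 h with rfl | h'
      · exact prov_and_left
      · exact prov_trans prov_and_right (ih h')

lemma prov_K_mono {G : Grp n} {A B : Formula P n} (h : Provable (A.imp B)) :
    Provable ((Formula.K G A).imp (Formula.K G B)) := by
  have h1 : Provable (Formula.K G (A.imp B)) := Provable.necK h
  have h2 : Provable (((Formula.K G A).and (Formula.K G (A.imp B))).imp (Formula.K G B)) :=
    Provable.distK
  have h3 := prov_export h2
  exact prov_imp_mp h3 (prov_weaken h1)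

lemma extract_one {L₁ : List (Formula P n)} {b : Formula P n} {X : Set (Formula P n)}
    (hmem : ∀ χ ∈ L₁, χ ∈ insert b X) {A : Formula P n}
    (hp : Provable ((conj L₁).imp A)) :
    ∃ L : List (Formula P n), (∀ χ ∈ L, χ ∈ X) ∧ Provable ((conj L).imp (b.imp A)) := by
  classical
  refine ⟨L₁.filter (fun χ => decide (χ ∈ X)), ?_, ?_⟩
  · intro χ hχ
    have := (List.mem_filter.1 hχ).2
    simpa using this
  · have hstep : Provable (((conj (L₁.filter (fun χ => decide (χ ∈ X)))).and b).imp (conj L₁)) := by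
      apply prov_conj_intro
      intro χ hχ
      rcases Set.mem_insert_iff.1 (hmem χ hχ) with h | h
      · subst h; exact prov_and_right
      · have hmem' : χ ∈ L₁.filter (fun χ => decide (χ ∈ X)) :=
          List.mem_filter.2 ⟨hχ, by simpa using h⟩
        exact prov_trans prov_and_left (prov_conj_mem hmem')
    exact prov_export (prov_trans hstep hp)

lemma not_consistent_iff {X : Set (Formula P n)} :
    ¬ Consistent X ↔
      ∃ L : List (Formula P n), (∀ φ ∈ L, φ ∈ X) ∧ Provable ((conj L).imp Formula.bot) := by
  simp [Consistent]

lemma mcs_mem_of_provable {X : Set (Formula P n)} (hX : MCS X) {φ : Formula P n}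
    (h : Provable φ) : φ ∈ X := by
  by_contra hφ
  obtain ⟨L₀, hL₀, hp₀⟩ := not_consistent_iff.1 (hX.2 φ hφ)
  obtain ⟨L, hL, hp⟩ := extract_one hL₀ hp₀
  exact hX.1 ⟨L, hL, prov_imp_mp hp (prov_weaken h)⟩

lemma mcs_mp {X : Set (Formula P n)} (hX : MCS X) {φ ψ : Formula P n}
    (himp : φ.imp ψ ∈ X) (hφ : φ ∈ X) : ψ ∈ X := by
  by_contra hψ
  obtain ⟨L₀, hL₀, hp₀⟩ := not_consistent_iff.1 (hX.2 ψ hψ)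
  obtain ⟨L, hL, hp⟩ := extract_one hL₀ hp₀
  set L' : List (Formula P n) := φ :: (φ.imp ψ) :: L with hL'
  have hmem' : ∀ χ ∈ L', χ ∈ X := by
    intro χ hχ
    rcases List.mem_cons.1 hχ with rfl | hχ
    · exact hφ
    rcases List.mem_cons.1 hχ with rfl | hχ
    · exact himp
    · exact hL χ hχ
  have ha : Provable ((conj L').imp φ) := prov_and_left
  have hb : Provable ((conj L').imp (φ.imp ψ)) := prov_trans prov_and_right prov_and_left
  have hc : Provable ((conj L').imp (conj L)) := prov_trans prov_and_right prov_and_right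
  have hψp : Provable ((conj L').imp ψ) := prov_imp_mp hb ha
  have hd : Provable ((conj L').imp (ψ.imp Formula.bot)) := prov_trans hc hp
  exact hX.1 ⟨L', hmem', prov_imp_mp hd hψp⟩

lemma mcs_not_both {X : Set (Formula P n)} (hX : Consistent X) {φ : Formula P n}
    (h1 : φ ∈ X) (h2 : φ.neg ∈ X) : False := by
  apply hX
  refine ⟨[φ, φ.neg], ?_, ?_⟩
  · intro χ hχ
    rcases List.mem_cons.1 hχ with rfl | hχ
    · exact h1
    rcases List.mem_cons.1 hχ with rfl | hχ
    · exact h2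
    · simp at hχ
  · apply Provable.taut
    intro v
    simp only [conj, List.foldr, Formula.imp, Formula.bot, beval]
    cases beval v φ <;> rfl

lemma lindenbaum {X : Set (Formula P n)} (h : Consistent X) : ∃ Y, X ⊆ Y ∧ MCS Y := by
  have hzorn : ∀ c ⊆ {Z : Set (Formula P n) | Consistent Z}, IsChain (· ⊆ ·) c → c.Nonempty →
      ∃ ub ∈ {Z : Set (Formula P n) | Consistent Z}, ∀ s ∈ c, s ⊆ ub := by
    intro c hcS hchain hcne
    refine ⟨⋃₀ c, ?_, fun Z hZ => Set.subset_sUnion_of_mem hZ⟩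
    rintro ⟨L, hL, hp⟩
    have key : ∀ L : List (Formula P n), (∀ χ ∈ L, χ ∈ ⋃₀ c) → ∃ Z ∈ c, ∀ χ ∈ L, χ ∈ Z := by
      intro L
      induction L with
      | nil =>
          intro _
          obtain ⟨Z, hZ⟩ := hcne
          exact ⟨Z, hZ, by simp⟩
      | cons a t ih =>
          intro hmem
          obtain ⟨Z, hZ, hZt⟩ := ih fun χ hχ => hmem χ (List.mem_cons_of_mem _ hχ)
          obtain ⟨W, hW, haW⟩ := hmem a List.mem_cons_self
          rcases hchain.total hZ hW with hsub | hsub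
          · refine ⟨W, hW, fun χ hχ => ?_⟩
            rcases List.mem_cons.1 hχ with rfl | hχ
            · exact haW
            · exact hsub (hZt χ hχ)
          · refine ⟨Z, hZ, fun χ hχ => ?_⟩
            rcases List.mem_cons.1 hχ with rfl | hχ
            · exact hsub haW
            · exact hZt χ hχ
    obtain ⟨Z, hZ, hLZ⟩ := key L hL
    exact hcS hZ ⟨L, hLZ, hp⟩
  obtain ⟨Y, hXY, hmax⟩ :=
    zorn_subset_nonempty {Z : Set (Formula P n) | Consistent Z} hzorn X h
  refine ⟨Y, hXY, hmax.1, fun φ hφ hcons => hφ ?_⟩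
  exact hmax.2 hcons (Set.subset_insert φ Y) (Set.mem_insert φ Y)

lemma mcs_KK {X : Set (Formula P n)} (hX : MCS X) {G : Grp n} {A B : Formula P n}
    (h1 : Formula.K G (A.imp B) ∈ X) (h2 : Formula.K G A ∈ X) : Formula.K G B ∈ X := by
  have hd : Provable ((Formula.K G A).imp ((Formula.K G (A.imp B)).imp (Formula.K G B))) :=
    prov_export Provable.distK
  exact mcs_mp hX (mcs_mp hX (mcs_mem_of_provable hX hd) h2) h1

lemma K_conj_mem {X : Set (Formula P n)} (hX : MCS X) {L : List (Formula P n)}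
    (h : ∀ χ ∈ L, Formula.K (∅ : Grp n) χ ∈ X) : Formula.K (∅ : Grp n) (conj L) ∈ X := by
  induction L with
  | nil =>
      exact mcs_mem_of_provable hX (Provable.necK (Provable.taut fun v => rfl))
  | cons a t ih =>
      have h1 : Formula.K (∅ : Grp n) a ∈ X := h a List.mem_cons_self
      have h2 : Formula.K (∅ : Grp n) (conj t) ∈ X :=
        ih fun χ hχ => h χ (List.mem_cons_of_mem _ hχ)
      have h3 : Formula.K (∅ : Grp n) ((conj t).imp (a.and (conj t))) ∈ X :=
        mcs_mp hX (mcs_mem_of_provable hX (prov_K_mono prov_and_intro)) h1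
      exact mcs_KK hX h3 h2

lemma edOf_append (X0 : Set (Formula P n)) (l : List (CStep P n)) (c : CStep P n) :
    edOf X0 (l ++ [c]) = c.X := by
  simp [edOf]

lemma goodFrom_append {X0 : Set (Formula P n)} {l : List (CStep P n)} {c : CStep P n} :
    goodFrom X0 (l ++ [c]) ↔ goodFrom X0 l ∧ MCS c.X ∧ c.G ≠ ∅ ∧
      (Formula.Kh c.G c.fml) ∈ edOf X0 l ∧ (Formula.K c.G c.fml) ∈ c.X ∧
      (∀ ψ, (Formula.K c.H ψ) ∈ edOf X0 l → ψ ∈ c.X) := by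
  induction l generalizing X0 with
  | nil =>
      constructor
      · rintro ⟨h1, h2, h3, h4, h5, -⟩
        exact ⟨trivial, h1, h2, h3, h4, h5⟩
      · rintro ⟨-, h1, h2, h3, h4, h5⟩
        exact ⟨h1, h2, h3, h4, h5, trivial⟩
  | cons d t ih =>
      have hed : edOf X0 (d :: t) = edOf d.X t := rfl
      constructor
      · rintro ⟨h1, h2, h3, h4, h5, h6⟩
        obtain ⟨g1, g2, g3, g4, g5, g6⟩ := ih.mp h6
        exact ⟨⟨h1, h2, h3, h4, h5, g1⟩, g2, g3, by rw [hed]; exact g4, g5,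
          by rw [hed]; exact g6⟩
      · rintro ⟨⟨h1, h2, h3, h4, h5, g1⟩, g2, g3, g4, g5, g6⟩
        rw [hed] at g4 g6
        exact ⟨h1, h2, h3, h4, h5, ih.mpr ⟨g1, g2, g3, g4, g5, g6⟩⟩

lemma ed_mcs {X0 : Set (Formula P n)} (hX0 : MCS X0) {l : List (CStep P n)}
    (hl : goodFrom X0 l) : MCS (edOf X0 l) := by
  induction l generalizing X0 with
  | nil => exact hX0
  | cons c t ih => exact ih hl.1 hl.2.2.2.2.2

end Aux

/-- Existence lemma for Kh in the canonical model: let ∅ ≠ H ⊆ G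
and let (ψ,H) be executable on [s]_G. If Kh_G φ ∈ ed(s') for every s' with
[s]_G →_{(ψ,H)} [s']_G, then Kh_G φ ∈ ed(s). -/
theorem kh_existence {P : Type} [Countable P] {n : ℕ}
    (X0 : Set (Formula P n)) (hX0 : MCS X0)
    (s : CState X0) (G H : Grp n) (hH : H ≠ ∅) (hHG : H ⊆ G)
    (ψ φ : Formula P n)
    (hexec : ∀ u : CState X0, (∀ i ∈ G, csim X0 i s u) → ∃ v, ctr X0 (ψ, H) u v)
    (hsucc : ∀ s' : CState X0,
      (∃ u v : CState X0, (∀ i ∈ G, csim X0 i s u) ∧ (∀ i ∈ G, csim X0 i s' v) ∧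
        ctr X0 (ψ, H) u v) →
      Formula.Kh G φ ∈ edOf X0 s'.1) :
    Formula.Kh G φ ∈ edOf X0 s.1 := by
  classical
  set X := edOf X0 s.1 with hXdef
  have hXmcs : MCS X := ed_mcs hX0 s.2
  have hrefl : ∀ (u : CState X0) (i : Fin n), i ∈ G → csim X0 i u u :=
    fun u i _ => (csim_equiv X0 i).refl u
  -- Step A: Kh_H ψ ∈ X, from executability at s itself.
  obtain ⟨v, G', Y', hY', hveq⟩ := hexec s (hrefl s)
  have hgood := v.2
  rw [hveq] at hgood
  have hKh : Formula.Kh H ψ ∈ X := (goodFrom_append.1 hgood).2.2.2.1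
  -- The set Γ is inconsistent.
  set D : Set (Formula P n) := {χ | Formula.K (∅ : Grp n) χ ∈ X} with hD
  set Γ : Set (Formula P n) :=
    insert (Formula.K H ψ) (insert ((Formula.Kh G φ).neg) D) with hΓ
  have hΓincons : ¬ Consistent Γ := by
    intro hcons
    obtain ⟨Y, hΓY, hYmcs⟩ := lindenbaum hcons
    have hKHψY : Formula.K H ψ ∈ Y := hΓY (by rw [hΓ]; exact Set.mem_insert _ _)
    have hnegY : (Formula.Kh G φ).neg ∈ Y := hΓY
      (by rw [hΓ]; exact Set.mem_insert_of_mem _ (Set.mem_insert _ _))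
    have hDY : ∀ χ, Formula.K (∅ : Grp n) χ ∈ X → χ ∈ Y := fun χ hχ =>
      hΓY (by rw [hΓ]; exact Set.mem_insert_of_mem _ (Set.mem_insert_of_mem _ hχ))
    have hgt : goodFrom X0 (s.1 ++ [⟨ψ, H, ∅, Y⟩]) := by
      rw [goodFrom_append]
      exact ⟨s.2, hYmcs, hH, hKh, hKHψY, hDY⟩
    set t : CState X0 := ⟨s.1 ++ [⟨ψ, H, ∅, Y⟩], hgt⟩ with ht
    have hKhGφ : Formula.Kh G φ ∈ edOf X0 t.1 :=
      hsucc t ⟨s, t, hrefl s, hrefl t, ⟨∅, Y, hYmcs, rfl⟩⟩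
    rw [ht] at hKhGφ
    rw [edOf_append] at hKhGφ
    exact mcs_not_both hYmcs.1 hKhGφ hnegY
  -- Extract a finite list from D witnessing the inconsistency.
  obtain ⟨L₀, hL₀, hp₀⟩ := not_consistent_iff.1 hΓincons
  rw [hΓ] at hL₀
  obtain ⟨L₁, hL₁, hp₁⟩ := extract_one hL₀ hp₀
  obtain ⟨L, hL, hp⟩ := extract_one hL₁ hp₁
  -- ⊢ conj L → (¬Kh_G φ → (K_H ψ → ⊥)); turn it into ⊢ conj L → (K_H ψ → Kh_G φ).
  have htaut : Provable
      ((((Formula.Kh G φ).neg).imp ((Formula.K H ψ).imp Formula.bot)).imp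
        ((Formula.K H ψ).imp (Formula.Kh G φ))) := by
    apply Provable.taut
    intro v
    simp only [Formula.imp, Formula.bot, beval]
    cases v (Formula.Kh G φ) <;> cases v (Formula.K H ψ) <;> rfl
  have hθ : Provable ((conj L).imp ((Formula.K H ψ).imp (Formula.Kh G φ))) :=
    prov_trans hp htaut
  -- K_∅ (conj L) ∈ X, hence K_∅ θ ∈ X.
  have hKconj : Formula.K (∅ : Grp n) (conj L) ∈ X := K_conj_mem hXmcs (fun χ hχ => hL χ hχ)
  have hKθ : Formula.K (∅ : Grp n) ((Formula.K H ψ).imp (Formula.Kh G φ)) ∈ X :=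
    mcs_mp hXmcs (mcs_mem_of_provable hXmcs (prov_K_mono hθ)) hKconj
  -- AxEmpMono and T.
  have hEmp : Formula.K (∅ : Grp n)
      ((Formula.Kh G (Formula.K H ψ)).imp (Formula.Kh G (Formula.Kh G φ))) ∈ X :=
    mcs_mp hXmcs (mcs_mem_of_provable hXmcs Provable.axEmpMono) hKθ
  have hImp : (Formula.Kh G (Formula.K H ψ)).imp (Formula.Kh G (Formula.Kh G φ)) ∈ X :=
    mcs_mp hXmcs (mcs_mem_of_provable hXmcs Provable.axT) hEmp
  -- From Kh_H ψ ∈ X derive Kh_G (K_H ψ) ∈ X.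
  have h1 : Formula.Kh H (Formula.K H ψ) ∈ X :=
    mcs_mp hXmcs (mcs_mem_of_provable hXmcs Provable.axKhtoKhK) hKh
  have h2 : Formula.Kh G (Formula.K H ψ) ∈ X :=
    mcs_mp hXmcs (mcs_mem_of_provable hXmcs (Provable.axKhMono hHG)) h1
  have h3 : Formula.Kh G (Formula.Kh G φ) ∈ X := mcs_mp hXmcs hImp h2
  exact mcs_mp hXmcs (mcs_mem_of_provable hXmcs Provable.axKhKh) h3

end DKH
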